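/- Let p be a symmetric Nash equilibrium of the game (A,A) from the reduction with support contained in [n] and support size at least 2. Then every index i in the 'strong support' SSP(p) = {i : p_i > 1/n²} has |SSP(p)| ≥ k, and the vertices corresponding to SSP(p) form a clique in G; hence G has a clique of size k. -/

import Mathlib

open Matrix

/-- The symmetric `2n × 2n` reduction matrix built from a graph `G` on `n` vertices. -/
def redMatrix (n k : ℕ) (G : SimpleGraph (Fin n)) [DecidableRel G.Adj] (h ε : ℝ) :
    Matrix (Fin (2 * n)) (Fin (2 * n)) ℝ := fun i j =>
  if hi : (i : ℕ) < n then
    if hj : (j : ℕ) < n then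
      if (i : ℕ) = (j : ℕ) then 0
      else if G.Adj ⟨i, hi⟩ ⟨j, hj⟩ then 1 else -h
    else if (j : ℕ) = (i : ℕ) + n then (k : ℝ) - 1 else -ε
  else
    if hj : (j : ℕ) < n then
      if (i : ℕ) = (j : ℕ) + n then (k : ℝ) - 1 else -ε
    else if (i : ℕ) = (j : ℕ) then h else -ε

set_option maxHeartbeats 2000000 in
/-- if `p` is a symmetric Nash equilibrium of the reduction game `(A,A)`
with support contained in `[n]` and support size at least 2, then the strong support
`SSP(p) = {i : p_i > 1/n²}` has at least `k` elements, its vertices form a clique in `G`,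
and hence `G` has a clique of size `k`. -/
theorem NE_gives_clique {n k : ℕ} (G : SimpleGraph (Fin n)) [DecidableRel G.Adj]
    (huniv : ∃ v : Fin n, ∀ u, u ≠ v → G.Adj v u)
    (hk : 1 < k) (hkn : k < n - 1)
    (h ε : ℝ) (hh : (2 * n ^ 2 + 5 : ℝ) < h)
    (hε : 0 < ε ∧ ε ≤ 1 / (10 * n ^ 3))
    (p : Fin (2 * n) → ℝ) (hp : p ∈ stdSimplex ℝ (Fin (2 * n)))
    (hNE : ∀ i, 0 < p i → ∀ j,
      (redMatrix n k G h ε).mulVec p j ≤ (redMatrix n k G h ε).mulVec p i)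
    (hsupp : ∀ i : Fin (2 * n), 0 < p i → (i : ℕ) < n)
    (hmix : 2 ≤ (Finset.univ.filter (fun i => 0 < p i)).card) :
    k ≤ (Finset.univ.filter (fun i : Fin (2 * n) => 1 / (n : ℝ) ^ 2 < p i)).card ∧
    (∀ i j : Fin (2 * n), 1 / (n : ℝ) ^ 2 < p i → 1 / (n : ℝ) ^ 2 < p j → i ≠ j →
      ∃ (hi : (i : ℕ) < n) (hj : (j : ℕ) < n), G.Adj ⟨i, hi⟩ ⟨j, hj⟩) ∧
    (∃ s : Finset (Fin n), G.IsNClique k s) := by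
  classical
  obtain ⟨hε0, hεle⟩ := hε
  have hn4 : 4 ≤ n := by omega
  have hN : (4:ℝ) ≤ (n:ℝ) := by exact_mod_cast hn4
  have hNpos : (0:ℝ) < (n:ℝ) := by linarith
  have hp0 : ∀ i, 0 ≤ p i := hp.1
  have hp1 : ∑ i, p i = 1 := hp.2
  have hh0 : (0:ℝ) < h := by nlinarith [sq_nonneg (n:ℝ)]
  have pzero : ∀ j : Fin (2*n), ¬((j : ℕ) < n) → p j = 0 := by
    intro j hj
    by_contra hne
    exact hj (hsupp j (lt_of_le_of_ne (hp0 j) (Ne.symm hne)))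
  set A := redMatrix n k G h ε with hA
  have hmv : ∀ i, A.mulVec p i = ∑ j, A i j * p j := fun i => rfl
  -- estimate 1
  have est1 : ∀ m : Fin (2*n), (hm : (m : ℕ) < n) →
      ((k:ℝ)-1) * p m - ε ≤ A.mulVec p ⟨(m:ℕ)+n, by omega⟩ := by
    intro m hm
    set m' : Fin (2*n) := ⟨(m:ℕ)+n, by omega⟩ with hm'
    have hm'n : ¬ ((m' : ℕ) < n) := by simp [hm']
    have hterm : ∀ j : Fin (2*n),
        (if j = m then ((k:ℝ)-1) * p m else -ε * p j) ≤ A m' j * p j := by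
      intro j
      by_cases hjm : j = m
      · subst hjm
        have : A m' j = (k:ℝ) - 1 := by
          simp only [hA, redMatrix, dif_neg hm'n, dif_pos hm]
          simp [hm']
        rw [this, if_pos rfl]
      · rw [if_neg hjm]
        by_cases hjn : (j : ℕ) < n
        · have hne : ¬ ((m' : ℕ) = (j:ℕ) + n) := by
            simp only [hm']
            intro hc
            exact hjm (Fin.ext (by omega)).symm
          have : A m' j = -ε := by
            simp only [hA, redMatrix, dif_neg hm'n, dif_pos hjn, if_neg hne]
          rw [this]
        · rw [pzero j hjn, mul_zero, mul_zero]
    calc ((k:ℝ)-1) * p m - ε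
        ≤ ∑ j, (if j = m then ((k:ℝ)-1) * p m else -ε * p j) := by
          have hre : ∀ j : Fin (2*n), (if j = m then ((k:ℝ)-1) * p m else -ε * p j)
              = -ε * p j + (if j = m then ((k:ℝ)-1) * p m + ε * p m else 0) := by
            intro j; by_cases hj : j = m <;> simp [hj] <;> ring
          rw [Finset.sum_congr rfl (fun j _ => hre j), Finset.sum_add_distrib,
            Finset.sum_ite_eq' Finset.univ m, if_pos (Finset.mem_univ m),
            ← Finset.mul_sum, hp1]
          nlinarith [mul_nonneg hε0.le (hp0 m)]
      _ ≤ ∑ j, A m' j * p j := Finset.sum_le_sum (fun j _ => hterm j)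
      _ = A.mulVec p m' := (hmv m').symm
  -- estimate 2: plain upper bound
  have est2 : ∀ i : Fin (2*n), (i : ℕ) < n → A.mulVec p i ≤ 1 - p i := by
    intro i hi
    have hterm : ∀ j : Fin (2*n),
        A i j * p j ≤ p j - (if j = i then p i else 0) := by
      intro j
      by_cases hji : j = i
      · subst hji
        have : A j j = 0 := by
          simp only [hA, redMatrix, dif_pos hi]
          simp
        rw [this, if_pos rfl]; simp
      · rw [if_neg hji, sub_zero]
        by_cases hjn : (j : ℕ) < n
        · have hAle : A i j ≤ 1 := by
            simp only [hA, redMatrix, dif_pos hi, dif_pos hjn]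
            have hv : ¬ ((i:ℕ) = (j:ℕ)) := fun hc => hji (Fin.ext hc.symm)
            rw [if_neg hv]
            split <;> linarith
          calc A i j * p j ≤ 1 * p j := mul_le_mul_of_nonneg_right hAle (hp0 j)
            _ = p j := one_mul _
        · rw [pzero j hjn, mul_zero]
    calc A.mulVec p i = ∑ j, A i j * p j := hmv i
      _ ≤ ∑ j, (p j - (if j = i then p i else 0)) := Finset.sum_le_sum (fun j _ => hterm j)
      _ = 1 - p i := by
          rw [Finset.sum_sub_distrib, hp1, Finset.sum_ite_eq' Finset.univ i,
            if_pos (Finset.mem_univ i)]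
  -- estimate 2': with a non-adjacent partner
  have est2' : ∀ i j0 : Fin (2*n), ∀ (hi : (i : ℕ) < n) (hj0 : (j0 : ℕ) < n),
      i ≠ j0 → ¬ G.Adj ⟨(i:ℕ), hi⟩ ⟨(j0:ℕ), hj0⟩ →
      A.mulVec p i ≤ 1 - p i - (h+1) * p j0 := by
    intro i j0 hi hj0 hij0 hnadj
    have hterm : ∀ j : Fin (2*n),
        A i j * p j ≤ p j - (if j = i then p i else 0)
          - (if j = j0 then (h+1) * p j0 else 0) := by
      intro j
      by_cases hji : j = i
      · subst hji
        have : A j j = 0 := by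
          simp only [hA, redMatrix, dif_pos hi]
          simp
        rw [this, if_pos rfl, if_neg hij0]; simp
      · rw [if_neg hji]
        by_cases hjj0 : j = j0
        · subst hjj0
          have : A i j = -h := by
            simp only [hA, redMatrix, dif_pos hi, dif_pos hj0]
            have hv : ¬ ((i:ℕ) = (j:ℕ)) := fun hc => hji (Fin.ext hc.symm)
            rw [if_neg hv, if_neg hnadj]
          rw [this, if_pos rfl]
          nlinarith [hp0 j]
        · rw [if_neg hjj0, sub_zero, sub_zero]
          by_cases hjn : (j : ℕ) < n
          · have hAle : A i j ≤ 1 := by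
              simp only [hA, redMatrix, dif_pos hi, dif_pos hjn]
              have hv : ¬ ((i:ℕ) = (j:ℕ)) := fun hc => hji (Fin.ext hc.symm)
              rw [if_neg hv]
              split <;> linarith
            calc A i j * p j ≤ 1 * p j := mul_le_mul_of_nonneg_right hAle (hp0 j)
              _ = p j := one_mul _
          · rw [pzero j hjn, mul_zero]
    calc A.mulVec p i = ∑ j, A i j * p j := hmv i
      _ ≤ ∑ j, (p j - (if j = i then p i else 0) - (if j = j0 then (h+1) * p j0 else 0)) :=
          Finset.sum_le_sum (fun j _ => hterm j)
      _ = 1 - p i - (h+1) * p j0 := by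
          rw [Finset.sum_sub_distrib, Finset.sum_sub_distrib, hp1,
            Finset.sum_ite_eq' Finset.univ i, Finset.sum_ite_eq' Finset.univ j0,
            if_pos (Finset.mem_univ i), if_pos (Finset.mem_univ j0)]

  -- choose an index of maximal weight
  obtain ⟨m, -, hm_max⟩ := Finset.exists_max_image (Finset.univ : Finset (Fin (2*n))) p
    ⟨⟨0, by omega⟩, Finset.mem_univ _⟩
  have hsum_le : (1:ℝ) ≤ 2*(n:ℝ) * p m := by
    have := Finset.sum_le_card_nsmul Finset.univ p (p m) (fun i _ => hm_max i (Finset.mem_univ i))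
    rw [hp1, Finset.card_univ, Fintype.card_fin, nsmul_eq_mul] at this
    push_cast at this
    linarith
  have hmpos : 0 < p m := by nlinarith
  have hmlt : (m : ℕ) < n := hsupp m hmpos
  set m' : Fin (2*n) := ⟨(m:ℕ)+n, by omega⟩ with hm'def
  have hk2 : (2:ℝ) ≤ (k:ℝ) := by exact_mod_cast hk
  have hkN : (k:ℝ) + 2 ≤ (n:ℝ) := by exact_mod_cast (by omega : k + 2 ≤ n)
  have hε1 : ε ≤ 1 := by
    have h10 : (1:ℝ) ≤ 10 * (n:ℝ)^3 := by nlinarith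
    calc ε ≤ 1 / (10*(n:ℝ)^3) := hεle
      _ ≤ 1 := by rw [div_le_one (by nlinarith)]; exact h10
  have hchain : ((k:ℝ)-1) * p m - ε ≤ 1 - p m :=
    le_trans (est1 m hmlt) (le_trans (hNE m hmpos m') (est2 m hmlt))
  have hpm_ub : (k:ℝ) * p m ≤ 1 + ε := by linarith
  -- the adjacency claim
  have hadj : ∀ i j : Fin (2*n), 1 / (n:ℝ) ^ 2 < p i → 1 / (n:ℝ) ^ 2 < p j → i ≠ j →
      ∃ (hi : (i : ℕ) < n) (hj : (j : ℕ) < n), G.Adj ⟨i, hi⟩ ⟨j, hj⟩ := by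
    intro i j hpi hpj hij
    have hn2 : (0:ℝ) < 1/(n:ℝ)^2 := by positivity
    have hpi0 : 0 < p i := lt_trans hn2 hpi
    have hpj0 : 0 < p j := lt_trans hn2 hpj
    have hi := hsupp i hpi0
    have hj := hsupp j hpj0
    refine ⟨hi, hj, ?_⟩
    by_contra hnadj
    have h2 := est2' i j hi hj hij hnadj
    have h3 : ((k:ℝ)-1) * p m - ε ≤ A.mulVec p i := le_trans (est1 m hmlt) (hNE i hpi0 m')
    have h4 : (h+1) * p j ≤ 1 + ε := by
      nlinarith [mul_nonneg (by linarith : (0:ℝ) ≤ (k:ℝ)-1) (hp0 m), hp0 i]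
    have h5 : (2*(n:ℝ)^2+6) * (1/(n:ℝ)^2) ≤ (h+1) * p j :=
      mul_le_mul (by linarith) (le_of_lt hpj) (le_of_lt hn2) (by linarith)
    have h6 : (2*(n:ℝ)^2+6) * (1/(n:ℝ)^2) = 2 + 6/(n:ℝ)^2 := by
      field_simp
    nlinarith [div_pos (by norm_num : (0:ℝ)<6) (by positivity : (0:ℝ) < (n:ℝ)^2)]
  -- the strong support
  set S := Finset.univ.filter (fun i : Fin (2*n) => 1 / (n:ℝ) ^ 2 < p i) with hSdef
  have hub : ∀ i : Fin (2*n), p i ≤ (1+ε)/(k:ℝ) := by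
    intro i
    rw [le_div_iff₀ (by linarith : (0:ℝ) < (k:ℝ))]
    calc p i * k ≤ p m * k :=
          mul_le_mul_of_nonneg_right (hm_max i (Finset.mem_univ i)) (by linarith)
      _ ≤ 1 + ε := by linarith
  have hSup : ∑ i ∈ S, p i ≤ (S.card : ℝ) * ((1+ε)/(k:ℝ)) := by
    have := Finset.sum_le_card_nsmul S p ((1+ε)/(k:ℝ)) (fun i _ => hub i)
    rwa [nsmul_eq_mul] at this
  have hcardn : (Finset.univ.filter (fun i : Fin (2*n) => (i:ℕ) < n)).card = n := by
    have he : Finset.univ.filter (fun i : Fin (2*n) => (i:ℕ) < n)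
        = Finset.attachFin (Finset.range n) (fun m hm => by simp at hm; omega) := by
      ext i; simp [Finset.mem_attachFin]
    rw [he, Finset.card_attachFin, Finset.card_range]
  have hSlo : 1 - 1/(n:ℝ) ≤ ∑ i ∈ S, p i := by
    have hsplit : ∑ i ∈ S, p i
        + ∑ i ∈ Finset.univ.filter (fun i : Fin (2*n) => ¬ 1 / (n:ℝ) ^ 2 < p i), p i = 1 := by
      rw [hSdef, Finset.sum_filter_add_sum_filter_not]
      exact hp1
    have hcompl : ∑ i ∈ Finset.univ.filter (fun i : Fin (2*n) => ¬ 1 / (n:ℝ) ^ 2 < p i), p i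
        ≤ 1/(n:ℝ) := by
      calc ∑ i ∈ Finset.univ.filter (fun i : Fin (2*n) => ¬ 1 / (n:ℝ) ^ 2 < p i), p i
          ≤ ∑ i ∈ Finset.univ.filter (fun i : Fin (2*n) => ¬ 1 / (n:ℝ) ^ 2 < p i),
              (if (i:ℕ) < n then 1/(n:ℝ)^2 else 0) := by
            apply Finset.sum_le_sum
            intro i hi
            rw [Finset.mem_filter] at hi
            by_cases hin : (i:ℕ) < n
            · rw [if_pos hin]; exact le_of_not_gt hi.2
            · rw [if_neg hin, pzero i hin]
        _ ≤ ∑ i : Fin (2*n), (if (i:ℕ) < n then 1/(n:ℝ)^2 else 0) := by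
            apply Finset.sum_le_sum_of_subset_of_nonneg (Finset.filter_subset _ _)
            intro i _ _
            positivity
        _ = (n:ℝ) * (1/(n:ℝ)^2) := by
            rw [← Finset.sum_filter, Finset.sum_const, hcardn, nsmul_eq_mul]
        _ = 1/(n:ℝ) := by
            field_simp
    linarith
  have hcardS : k ≤ S.card := by
    by_contra hlt
    push_neg at hlt
    have hcS : (S.card:ℝ) + 1 ≤ (k:ℝ) := by exact_mod_cast hlt
    have h1 : 1 - 1/(n:ℝ) ≤ (S.card:ℝ) * (1+ε) / (k:ℝ) := by
      rw [mul_div_assoc]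
      exact le_trans hSlo hSup
    have hmain : (1 - 1/(n:ℝ)) * k ≤ (S.card:ℝ) * (1+ε) :=
      (le_div_iff₀ (by linarith : (0:ℝ) < (k:ℝ))).mp h1
    have hce : (S.card:ℝ) * (1+ε) ≤ ((k:ℝ)-1) * (1+ε) :=
      mul_le_mul_of_nonneg_right (by linarith) (by linarith)
    have hcomb : (1 - 1/(n:ℝ)) * k ≤ ((k:ℝ)-1) * (1+ε) := le_trans hmain hce
    have hmul := mul_le_mul_of_nonneg_right hcomb (le_of_lt hNpos)
    have hid : (1 - 1/(n:ℝ)) * k * n = ((n:ℝ)-1) * k := by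
      field_simp
    rw [hid] at hmul
    have hεN : ε * (10*(n:ℝ)^3) ≤ 1 := by
      rw [← le_div_iff₀ (by positivity)]
      exact hεle
    have hεb : ((k:ℝ)-1) * ε * (n:ℝ) ≤ 1 := by
      have hb1 : ((k:ℝ)-1) * ε * (n:ℝ) ≤ (n:ℝ) * ε * (n:ℝ) := by
        apply mul_le_mul_of_nonneg_right _ (le_of_lt hNpos)
        exact mul_le_mul_of_nonneg_right (by linarith) hε0.le
      have hb2 : (n:ℝ) * ε * (n:ℝ) ≤ 1 := by
        nlinarith [mul_nonneg hε0.le (show (0:ℝ) ≤ 10*(n:ℝ)^3 - (n:ℝ)^2 by nlinarith)]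
      linarith
    nlinarith [hmul, hεb, hk2, hkN, hN]
  -- from strong support to a clique in G
  have hle2 : n ≤ 2*n := by omega
  set S' : Finset (Fin n) := Finset.univ.filter
      (fun v : Fin n => 1 / (n:ℝ) ^ 2 < p (Fin.castLE hle2 v)) with hS'def
  have hcard' : k ≤ S'.card := by
    refine le_trans hcardS (Finset.card_le_card_of_injOn
      (fun i => ⟨(i:ℕ) % n, Nat.mod_lt _ (by omega)⟩) ?_ ?_)
    · intro i hiS
      rw [Finset.mem_coe, hSdef, Finset.mem_filter] at hiS
      have hin : (i:ℕ) < n := hsupp i (lt_trans (by positivity) hiS.2)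
      rw [Finset.mem_coe, hS'def, Finset.mem_filter]
      refine ⟨Finset.mem_univ _, ?_⟩
      have hci : Fin.castLE hle2 (⟨(i:ℕ) % n, Nat.mod_lt _ (by omega)⟩ : Fin n) = i := by
        apply Fin.ext
        simp [Nat.mod_eq_of_lt hin]
      beta_reduce
      rw [hci]
      exact hiS.2
    · intro a haS b hbS hab
      rw [Finset.mem_coe, hSdef, Finset.mem_filter] at haS hbS
      have han : (a:ℕ) < n := hsupp a (lt_trans (by positivity) haS.2)
      have hbn : (b:ℕ) < n := hsupp b (lt_trans (by positivity) hbS.2)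
      have := congrArg Fin.val hab
      simp [Nat.mod_eq_of_lt han, Nat.mod_eq_of_lt hbn] at this
      exact Fin.ext this
  have hclique : G.IsClique (S' : Set (Fin n)) := by
    intro u hu v hv huv
    rw [Finset.mem_coe, hS'def, Finset.mem_filter] at hu hv
    have hne : Fin.castLE hle2 u ≠ Fin.castLE hle2 v := by
      intro hc
      rw [Fin.ext_iff] at hc
      simp only [Fin.coe_castLE] at hc
      exact huv (Fin.ext hc)
    obtain ⟨hi, hj, hadj'⟩ := hadj _ _ hu.2 hv.2 hne
    have e1 : (⟨((Fin.castLE hle2 u : Fin (2*n)) : ℕ), hi⟩ : Fin n) = u := Fin.ext rfl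
    have e2 : (⟨((Fin.castLE hle2 v : Fin (2*n)) : ℕ), hj⟩ : Fin n) = v := Fin.ext rfl
    rwa [e1, e2] at hadj'
  obtain ⟨t, hts, htc⟩ := Finset.exists_subset_card_eq hcard'
  exact ⟨hcardS, hadj, ⟨t, hclique.subset (Finset.coe_subset.mpr hts), htc⟩⟩
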